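/- (Proposition 4.) Let H be a complex inner product space and A, B : H →ₗ[ℂ] H linear operators satisfying A ∘ B = −(B ∘ A) and B ∘ B = 0. Let v ∈ H satisfy the perfect first-order coherence condition |⟪A v, B v⟫| = ‖A v‖ · ‖B v‖. Then A (B v) = 0 (and hence also B (A v) = 0). Consequently, any normally-ordered correlator in the state v containing the operator product A B vanishes. -/

import Mathlib

open scoped ComplexInnerProductSpace in
/-- Proposition 4: if `A B = −B A`, `B² = 0` and the state `v` is perfectly
first-order coherent, `|⟪A v, B v⟫| = ‖A v‖·‖B v‖`, then `A (B v) = 0` and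
`B (A v) = 0`; any correlator containing the product `A B` vanishes. -/
theorem perfect_coherence_kills_two_particle_amplitude
    {H : Type*} [NormedAddCommGroup H] [InnerProductSpace ℂ H]
    (A B : H →ₗ[ℂ] H) (hAB : A ∘ₗ B = -(B ∘ₗ A)) (hBB : B ∘ₗ B = 0)
    (v : H) (h : ‖⟪A v, B v⟫‖ = ‖A v‖ * ‖B v‖) :
    A (B v) = 0 ∧ B (A v) = 0 := by
  have hAB' : A (B v) = -(B (A v)) := by
    have := congrFun (congrArg DFunLike.coe hAB) v
    simpa using this
  suffices hBA : B (A v) = 0 by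
    exact ⟨by rw [hAB', hBA, neg_zero], hBA⟩
  by_cases hA : A v = 0
  · rw [hA, map_zero]
  by_cases hB : B v = 0
  · have h0 : A (B v) = 0 := by rw [hB, map_zero]
    rw [h0] at hAB'
    exact neg_eq_zero.mp hAB'.symm
  have h' : ‖(⟪A v, B v⟫ : ℂ)‖ = ‖A v‖ * ‖B v‖ := by
    exact h
  obtain ⟨r, hr, hrel⟩ := (norm_inner_eq_norm_iff hA hB).mp h'
  have hBBv : B (B v) = 0 := by
    have := congrFun (congrArg DFunLike.coe hBB) v
    simpa using this
  have : r • B (A v) = 0 := by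
    rw [← map_smul, ← hrel, hBBv]
  exact (smul_eq_zero.mp this).resolve_left hr
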